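/- Let data points (x^ℓ, y_ℓ) ∈ ℝ^d × ℝ, ℓ = 1,…,N, be given, let k₁, k₂ ≥ 1, and for Θ = ((aⁱ, αᵢ)_{i=1}^{k₁}, (bʲ, βⱼ)_{j=1}^{k₂}) ∈ ℝ^{(k₁+k₂)(d+1)} define f(Θ) = (1/(2N)) Σ_{ℓ=1}^{N} ( y_ℓ − [ max_{1≤i≤k₁}((aⁱ)ᵀx^ℓ + αᵢ) − max_{1≤j≤k₂}((bʲ)ᵀx^ℓ + βⱼ) ] )². Then for any polyhedral set X ⊆ ℝ^{(k₁+k₂)(d+1)}, the set of d-stationary values f(D_{(f,X)}) of f on X is finite. -/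
import Mathlib


open Matrix Filter

noncomputable def finMax {k : ℕ} (hk : 0 < k) (g : Fin k → ℝ) : ℝ :=
  Finset.univ.sup' (Finset.univ_nonempty_iff.mpr ⟨⟨0, hk⟩⟩) g

/-- The parameter space `Θ = ((aⁱ, αᵢ)_{i=1}^{k₁}, (bʲ, βⱼ)_{j=1}^{k₂})`, a copy of
`ℝ^{(k₁+k₂)(d+1)}`. -/
abbrev RegSpace (d k₁ k₂ : ℕ) := (Fin k₁ → (Fin d → ℝ) × ℝ) × (Fin k₂ → (Fin d → ℝ) × ℝ)

/-- The least-squares piecewise affine regression objective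
`f(Θ) = (1/(2N)) Σ_ℓ (y_ℓ − [maxᵢ((aⁱ)ᵀxℓ + αᵢ) − maxⱼ((bʲ)ᵀxℓ + βⱼ)])²`. -/
noncomputable def regObj {d N k₁ k₂ : ℕ} (hk₁ : 0 < k₁) (hk₂ : 0 < k₂)
    (x : Fin N → Fin d → ℝ) (y : Fin N → ℝ) (Θ : RegSpace d k₁ k₂) : ℝ :=
  (1 / (2 * (N : ℝ))) * ∑ ℓ : Fin N, (y ℓ -
      (finMax hk₁ (fun i => (Θ.1 i).1 ⬝ᵥ x ℓ + (Θ.1 i).2) -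
       finMax hk₂ (fun j => (Θ.2 j).1 ⬝ᵥ x ℓ + (Θ.2 j).2))) ^ 2

/-- A polyhedral subset of a real normed space: the solution set of finitely many
continuous linear inequalities. -/
def IsPolyhedralE {E : Type*} [NormedAddCommGroup E] [NormedSpace ℝ E] (X : Set E) : Prop :=
  ∃ (m : ℕ) (L : Fin m → E →L[ℝ] ℝ) (b : Fin m → ℝ), X = {θ | ∀ i, L i θ ≤ b i}

/-- The one-sided directional derivative of `f` at `x` in direction `v` equals `L`. -/
def HasDirDerivE {E : Type*} [NormedAddCommGroup E] [NormedSpace ℝ E]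
    (f : E → ℝ) (x v : E) (L : ℝ) : Prop :=
  Filter.Tendsto (fun δ : ℝ => (f (x + δ • v) - f x) / δ) (nhdsWithin 0 (Set.Ioi 0)) (nhds L)

/-- `x₀` is a d(irectional)-stationary point of `f` on `X`. -/
def DStatE {E : Type*} [NormedAddCommGroup E] [NormedSpace ℝ E]
    (f : E → ℝ) (X : Set E) (x₀ : E) : Prop :=
  x₀ ∈ X ∧ ∀ x ∈ X, ∃ L, HasDirDerivE f x₀ (x - x₀) L ∧ 0 ≤ L

noncomputable def affTerm {d : ℕ} (x : Fin d → ℝ) (p : (Fin d → ℝ) × ℝ) : ℝ := p.1 ⬝ᵥ x + p.2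

def piece {d N k₁ k₂ : ℕ} (x : Fin N → Fin d → ℝ) (σ : Fin N → Fin k₁ × Fin k₂) :
    Set (RegSpace d k₁ k₂) :=
  {Θ | ∀ ℓ, (∀ i, affTerm (x ℓ) (Θ.1 i) ≤ affTerm (x ℓ) (Θ.1 (σ ℓ).1)) ∧
        (∀ j, affTerm (x ℓ) (Θ.2 j) ≤ affTerm (x ℓ) (Θ.2 (σ ℓ).2))}

noncomputable def qfun {d N k₁ k₂ : ℕ} (x : Fin N → Fin d → ℝ) (y : Fin N → ℝ)
    (σ : Fin N → Fin k₁ × Fin k₂) (Θ : RegSpace d k₁ k₂) : ℝ :=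
  (1 / (2 * (N : ℝ))) * ∑ ℓ : Fin N,
    (y ℓ - (affTerm (x ℓ) (Θ.1 (σ ℓ).1) - affTerm (x ℓ) (Θ.2 (σ ℓ).2))) ^ 2

lemma finMax_eq {k : ℕ} (hk : 0 < k) (g : Fin k → ℝ) (i₀ : Fin k) (h : ∀ i, g i ≤ g i₀) :
    finMax hk g = g i₀ :=
  le_antisymm (Finset.sup'_le _ _ fun i _ => h i) (Finset.le_sup' g (Finset.mem_univ i₀))

lemma exists_piece {d N k₁ k₂ : ℕ} (x : Fin N → Fin d → ℝ) (Θ : RegSpace d k₁ k₂)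
    (hk₁ : 0 < k₁) (hk₂ : 0 < k₂) : ∃ σ, Θ ∈ piece x σ := by
  have h1 : ∀ ℓ : Fin N, ∃ i : Fin k₁, ∀ i', affTerm (x ℓ) (Θ.1 i') ≤ affTerm (x ℓ) (Θ.1 i) := by
    intro ℓ
    obtain ⟨i, -, hi⟩ := Finset.exists_mem_eq_sup' (Finset.univ_nonempty_iff.mpr ⟨⟨0, hk₁⟩⟩)
      (fun i => affTerm (x ℓ) (Θ.1 i))
    exact ⟨i, fun i' => hi ▸ Finset.le_sup' (fun i => affTerm (x ℓ) (Θ.1 i)) (Finset.mem_univ i')⟩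
  have h2 : ∀ ℓ : Fin N, ∃ j : Fin k₂, ∀ j', affTerm (x ℓ) (Θ.2 j') ≤ affTerm (x ℓ) (Θ.2 j) := by
    intro ℓ
    obtain ⟨j, -, hj⟩ := Finset.exists_mem_eq_sup' (Finset.univ_nonempty_iff.mpr ⟨⟨0, hk₂⟩⟩)
      (fun j => affTerm (x ℓ) (Θ.2 j))
    exact ⟨j, fun j' => hj ▸ Finset.le_sup' (fun j => affTerm (x ℓ) (Θ.2 j)) (Finset.mem_univ j')⟩
  choose σ1 hσ1 using h1
  choose σ2 hσ2 using h2
  exact ⟨fun ℓ => (σ1 ℓ, σ2 ℓ), fun ℓ => ⟨hσ1 ℓ, hσ2 ℓ⟩⟩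

lemma regObj_eq_qfun {d N k₁ k₂ : ℕ} (hk₁ : 0 < k₁) (hk₂ : 0 < k₂)
    (x : Fin N → Fin d → ℝ) (y : Fin N → ℝ) (σ : Fin N → Fin k₁ × Fin k₂)
    {Θ : RegSpace d k₁ k₂} (hΘ : Θ ∈ piece x σ) :
    regObj hk₁ hk₂ x y Θ = qfun x y σ Θ := by
  unfold regObj qfun
  congr 1
  refine Finset.sum_congr rfl fun ℓ _ => ?_
  rw [show (fun i => (Θ.1 i).1 ⬝ᵥ x ℓ + (Θ.1 i).2) = fun i => affTerm (x ℓ) (Θ.1 i) from rfl,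
    show (fun j => (Θ.2 j).1 ⬝ᵥ x ℓ + (Θ.2 j).2) = fun j => affTerm (x ℓ) (Θ.2 j) from rfl,
    finMax_eq hk₁ _ (σ ℓ).1 (hΘ ℓ).1, finMax_eq hk₂ _ (σ ℓ).2 (hΘ ℓ).2]

lemma affTerm_comb {d : ℕ} (x : Fin d → ℝ) (a b : ℝ) (p q : (Fin d → ℝ) × ℝ) :
    affTerm x (a • p + b • q) = a * affTerm x p + b * affTerm x q := by
  simp only [affTerm, Prod.fst_add, Prod.snd_add, Prod.smul_fst, Prod.smul_snd,
    add_dotProduct, smul_dotProduct, smul_eq_mul]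
  ring

lemma comp1 {d k₁ k₂ : ℕ} (a b : ℝ) (Θ₁ Θ₂ : RegSpace d k₁ k₂) (i : Fin k₁) :
    ((a • Θ₁ + b • Θ₂).1 i) = a • (Θ₁.1 i) + b • (Θ₂.1 i) := rfl

lemma comp2 {d k₁ k₂ : ℕ} (a b : ℝ) (Θ₁ Θ₂ : RegSpace d k₁ k₂) (j : Fin k₂) :
    ((a • Θ₁ + b • Θ₂).2 j) = a • (Θ₁.2 j) + b • (Θ₂.2 j) := rfl

lemma piece_convex {d N k₁ k₂ : ℕ} (x : Fin N → Fin d → ℝ) (σ : Fin N → Fin k₁ × Fin k₂)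
    {Θ₁ Θ₂ : RegSpace d k₁ k₂} (h₁ : Θ₁ ∈ piece x σ) (h₂ : Θ₂ ∈ piece x σ)
    {a b : ℝ} (ha : 0 ≤ a) (hb : 0 ≤ b) :
    a • Θ₁ + b • Θ₂ ∈ piece x σ := by
  intro ℓ
  constructor
  · intro i
    rw [comp1, comp1, affTerm_comb, affTerm_comb]
    exact add_le_add (mul_le_mul_of_nonneg_left ((h₁ ℓ).1 i) ha)
      (mul_le_mul_of_nonneg_left ((h₂ ℓ).1 i) hb)
  · intro j
    rw [comp2, comp2, affTerm_comb, affTerm_comb]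
    exact add_le_add (mul_le_mul_of_nonneg_left ((h₁ ℓ).2 j) ha)
      (mul_le_mul_of_nonneg_left ((h₂ ℓ).2 j) hb)

lemma sq_comb {a b s t : ℝ} (ha : 0 ≤ a) (hb : 0 ≤ b) (hab : a + b = 1) :
    (a * s + b * t) ^ 2 ≤ a * s ^ 2 + b * t ^ 2 := by
  nlinarith [sq_nonneg (s - t), mul_nonneg ha hb]

lemma qfun_convex {d N k₁ k₂ : ℕ} (x : Fin N → Fin d → ℝ) (y : Fin N → ℝ)
    (σ : Fin N → Fin k₁ × Fin k₂) (Θ₁ Θ₂ : RegSpace d k₁ k₂)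
    {a b : ℝ} (ha : 0 ≤ a) (hb : 0 ≤ b) (hab : a + b = 1) :
    qfun x y σ (a • Θ₁ + b • Θ₂) ≤ a * qfun x y σ Θ₁ + b * qfun x y σ Θ₂ := by
  unfold qfun
  have hc : (0:ℝ) ≤ 1 / (2 * (N : ℝ)) := by positivity
  have : a * ((1 / (2 * (N : ℝ))) * ∑ ℓ : Fin N,
      (y ℓ - (affTerm (x ℓ) (Θ₁.1 (σ ℓ).1) - affTerm (x ℓ) (Θ₁.2 (σ ℓ).2))) ^ 2) +
      b * ((1 / (2 * (N : ℝ))) * ∑ ℓ : Fin N,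
      (y ℓ - (affTerm (x ℓ) (Θ₂.1 (σ ℓ).1) - affTerm (x ℓ) (Θ₂.2 (σ ℓ).2))) ^ 2) =
      (1 / (2 * (N : ℝ))) * ∑ ℓ : Fin N,
      (a * (y ℓ - (affTerm (x ℓ) (Θ₁.1 (σ ℓ).1) - affTerm (x ℓ) (Θ₁.2 (σ ℓ).2))) ^ 2 +
       b * (y ℓ - (affTerm (x ℓ) (Θ₂.1 (σ ℓ).1) - affTerm (x ℓ) (Θ₂.2 (σ ℓ).2))) ^ 2) := by
    rw [Finset.sum_add_distrib, ← Finset.mul_sum, ← Finset.mul_sum]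
    ring
  rw [this]
  refine mul_le_mul_of_nonneg_left (Finset.sum_le_sum fun ℓ _ => ?_) hc
  rw [comp1, comp2, affTerm_comb, affTerm_comb]
  have : y ℓ - (a * affTerm (x ℓ) (Θ₁.1 (σ ℓ).1) + b * affTerm (x ℓ) (Θ₂.1 (σ ℓ).1) -
      (a * affTerm (x ℓ) (Θ₁.2 (σ ℓ).2) + b * affTerm (x ℓ) (Θ₂.2 (σ ℓ).2))) =
      a * (y ℓ - (affTerm (x ℓ) (Θ₁.1 (σ ℓ).1) - affTerm (x ℓ) (Θ₁.2 (σ ℓ).2))) +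
      b * (y ℓ - (affTerm (x ℓ) (Θ₂.1 (σ ℓ).1) - affTerm (x ℓ) (Θ₂.2 (σ ℓ).2))) := by
    have : a = 1 - b := by linarith
    subst this; ring
  rw [this]
  exact sq_comb ha hb hab

lemma qfun_le {d N k₁ k₂ : ℕ} (hk₁ : 0 < k₁) (hk₂ : 0 < k₂)
    (x : Fin N → Fin d → ℝ) (y : Fin N → ℝ) (X : Set (RegSpace d k₁ k₂))
    (σ : Fin N → Fin k₁ × Fin k₂) {Θ₁ Θ₂ : RegSpace d k₁ k₂}
    (hΘ₁p : Θ₁ ∈ piece x σ) (hstat : DStatE (regObj hk₁ hk₂ x y) X Θ₁)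
    (hΘ₂X : Θ₂ ∈ X) (hΘ₂p : Θ₂ ∈ piece x σ) :
    qfun x y σ Θ₁ ≤ qfun x y σ Θ₂ := by
  obtain ⟨L, hL, hL0⟩ := hstat.2 Θ₂ hΘ₂X
  have key : L ≤ qfun x y σ Θ₂ - qfun x y σ Θ₁ := by
    refine le_of_tendsto hL ?_
    filter_upwards [Ioo_mem_nhdsGT_of_mem (⟨le_refl (0:ℝ), one_pos⟩ : (0:ℝ) ∈ Set.Ico 0 1)]
      with δ hδ
    have hδ0 : 0 < δ := hδ.1
    have hδ1 : δ < 1 := hδ.2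
    have hcomb : Θ₁ + δ • (Θ₂ - Θ₁) = (1 - δ) • Θ₁ + δ • Θ₂ := by
      rw [smul_sub, sub_smul, one_smul]; abel
    have hmem : (1 - δ) • Θ₁ + δ • Θ₂ ∈ piece x σ :=
      piece_convex x σ hΘ₁p hΘ₂p (by linarith) hδ0.le
    rw [hcomb, regObj_eq_qfun hk₁ hk₂ x y σ hmem, regObj_eq_qfun hk₁ hk₂ x y σ hΘ₁p,
      div_le_iff₀ hδ0]
    have := qfun_convex x y σ Θ₁ Θ₂ (a := 1 - δ) (b := δ) (by linarith) hδ0.le (by ring)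
    linarith
  linarith


/-- Proposition 16(b): the least-squares piecewise affine regression objective has only
finitely many d-stationary values on any polyhedral set `X`. -/
theorem stmt_18 {d N k₁ k₂ : ℕ} (hN : 0 < N) (hk₁ : 0 < k₁) (hk₂ : 0 < k₂)
    (x : Fin N → Fin d → ℝ) (y : Fin N → ℝ)
    (X : Set (RegSpace d k₁ k₂)) (hX : IsPolyhedralE X) :
    (regObj hk₁ hk₂ x y '' {Θ | DStatE (regObj hk₁ hk₂ x y) X Θ}).Finite := by
  have hsub : regObj hk₁ hk₂ x y '' {Θ | DStatE (regObj hk₁ hk₂ x y) X Θ} ⊆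
      ⋃ σ : Fin N → Fin k₁ × Fin k₂,
        regObj hk₁ hk₂ x y '' ({Θ | DStatE (regObj hk₁ hk₂ x y) X Θ} ∩ piece x σ) := by
    rintro v ⟨Θ, hΘ, rfl⟩
    obtain ⟨σ, hσ⟩ := exists_piece x Θ hk₁ hk₂
    exact Set.mem_iUnion.mpr ⟨σ, ⟨Θ, ⟨hΘ, hσ⟩, rfl⟩⟩
  refine Set.Finite.subset (Set.finite_iUnion fun σ => ?_) hsub
  apply Set.Subsingleton.finite
  rintro v₁ ⟨Θ₁, ⟨h₁s, h₁p⟩, rfl⟩ v₂ ⟨Θ₂, ⟨h₂s, h₂p⟩, rfl⟩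
  rw [regObj_eq_qfun hk₁ hk₂ x y σ h₁p, regObj_eq_qfun hk₁ hk₂ x y σ h₂p]
  exact le_antisymm (qfun_le hk₁ hk₂ x y X σ h₁p h₁s h₂s.1 h₂p)
    (qfun_le hk₁ hk₂ x y X σ h₂p h₂s h₁s.1 h₁p)
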